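/- Let E be the smallest equivalence relation on infinite subsets of ℕ containing all pairs (x, S₀(x)) and (x, S₁(x)). Then for every infinite x ⊆ ℕ there exist infinite y, z ⊆ x with y ∩ z = ∅ such that y E z E x. -/

import Mathlib

noncomputable def enum (x : Set ℕ) (n : ℕ) : ℕ := Nat.nth (· ∈ x) n
noncomputable def S0 (x : Set ℕ) : Set ℕ := Set.range (fun n => enum x (n+1))
noncomputable def S1 (x : Set ℕ) : Set ℕ := Set.range (fun n => enum x (2*n+1))
def sle (x y : Set ℕ) : Prop := ∀ n, enum x n ≤ enum y n
def ll (a b : Set ℕ) : Prop := ∀ m, ∃ k, m < (a ∩ Set.Ioo (enum b k) (enum b (k+1))).ncard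
def Estep (x y : Set ℕ) : Prop := x.Infinite ∧ (y = S0 x ∨ y = S1 x)
def E : Set ℕ → Set ℕ → Prop := Relation.EqvGen Estep
def G (x x' : Set ℕ) : Prop := x' = S0 x ∨ x' = S1 x ∨ x = S0 x' ∨ x = S1 x'
def toSet (f : ℕ → Bool) : Set ℕ := {n | f n = true}
noncomputable def Sb (b : Bool) : Set ℕ → Set ℕ := if b then S1 else S0
noncomputable def Siter : List Bool → Set ℕ → Set ℕ
  | [], y => y
  | b :: rest, y => Siter rest (Sb b y)

lemma enum_strictMono {x : Set ℕ} (hx : x.Infinite) : StrictMono (enum x) :=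
  Nat.nth_strictMono hx

lemma enum_range {f : ℕ → ℕ} (hf : StrictMono f) : enum (Set.range f) = f := by
  have hinf : (Set.range f).Infinite := Set.infinite_range_of_injective hf.injective
  have h1 : StrictMono (enum (Set.range f)) := enum_strictMono hinf
  have h2 : Set.range (enum (Set.range f)) = Set.range f := by
    have := Nat.range_nth_of_infinite (p := (· ∈ Set.range f)) hinf
    exact this
  exact (h1.range_inj hf).1 h2

lemma enum_mem {x : Set ℕ} (hx : x.Infinite) (n : ℕ) : enum x n ∈ x :=
  Nat.nth_mem_of_infinite hx n

lemma enum_S0 {x : Set ℕ} (hx : x.Infinite) : enum (S0 x) = fun n => enum x (n+1) := by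
  apply enum_range
  intro a b h; exact enum_strictMono hx (by omega)

lemma enum_S1 {x : Set ℕ} (hx : x.Infinite) : enum (S1 x) = fun n => enum x (2*n+1) := by
  apply enum_range
  intro a b h; exact enum_strictMono hx (by omega)

lemma S0_infinite {x : Set ℕ} (hx : x.Infinite) : (S0 x).Infinite :=
  Set.infinite_range_of_injective fun a b h => by
    have := (enum_strictMono hx).injective h; omega

lemma S1_infinite {x : Set ℕ} (hx : x.Infinite) : (S1 x).Infinite :=
  Set.infinite_range_of_injective fun a b h => by
    have := (enum_strictMono hx).injective h; omega

lemma S0_subset {x : Set ℕ} (hx : x.Infinite) : S0 x ⊆ x := by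
  rintro _ ⟨n, rfl⟩; exact enum_mem hx _

lemma S1_subset {x : Set ℕ} (hx : x.Infinite) : S1 x ⊆ x := by
  rintro _ ⟨n, rfl⟩; exact enum_mem hx _

theorem stmt7 (x : Set ℕ) (hx : x.Infinite) :
    ∃ y z : Set ℕ, y ⊆ x ∧ z ⊆ x ∧ y.Infinite ∧ z.Infinite ∧ y ∩ z = ∅ ∧
      E y z ∧ E z x := by
  have h0inf := S0_infinite hx
  refine ⟨S1 x, S1 (S0 x), S1_subset hx, (S1_subset h0inf).trans (S0_subset hx),
    S1_infinite hx, S1_infinite h0inf, ?_, ?_, ?_⟩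
  · ext a
    simp only [Set.mem_inter_iff, Set.mem_empty_iff_false, iff_false]
    rintro ⟨⟨n, rfl⟩, ⟨m, hm⟩⟩
    simp only [enum_S0 hx] at hm
    have := (enum_strictMono hx).injective hm
    omega
  · -- E (S1 x) (S1 (S0 x))
    have h1 : E x (S1 x) := Relation.EqvGen.rel _ _ ⟨hx, Or.inr rfl⟩
    have h2 : E x (S0 x) := Relation.EqvGen.rel _ _ ⟨hx, Or.inl rfl⟩
    have h3 : E (S0 x) (S1 (S0 x)) := Relation.EqvGen.rel _ _ ⟨h0inf, Or.inr rfl⟩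
    exact Relation.EqvGen.trans _ _ _ (Relation.EqvGen.symm _ _ h1)
      (Relation.EqvGen.trans _ _ _ h2 h3)
  · have h2 : E x (S0 x) := Relation.EqvGen.rel _ _ ⟨hx, Or.inl rfl⟩
    have h3 : E (S0 x) (S1 (S0 x)) := Relation.EqvGen.rel _ _ ⟨h0inf, Or.inr rfl⟩
    exact Relation.EqvGen.symm _ _ (Relation.EqvGen.trans _ _ _ h2 h3)
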